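/- Let λ, μ : A → k be two one-dimensional representations of a finite-dimensional symmetric Frobenius algebra A with basis {e_U} and dual basis {e_{U^∨}}. If Σ_U λ(e_U)·μ(e_{U^∨}) ≠ 0, then λ = μ. -/

import Mathlib

/-- Let `λ, μ : A → k` be two one-dimensional representations of a
finite-dimensional symmetric Frobenius algebra `A` with basis `{e_U}` and dual basis
`{e_{U^∨}}`.  If `∑_U λ(e_U) · μ(e_{U^∨}) ≠ 0`, then `λ = μ`. -/
theorem characters_eq_of_frobenius_sum_ne_zero
    (k A : Type*) [Field k] [Ring A] [Algebra k A] [FiniteDimensional k A]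
    -- the symmetric Frobenius pairing
    (B : A →ₗ[k] A →ₗ[k] k)
    (hsymm : ∀ a b : A, B a b = B b a)
    (hinv : ∀ a b c : A, B (a * b) c = B a (b * c))
    (hnondeg : ∀ a : A, (∀ b : A, B a b = 0) → a = 0)
    -- a basis `e` whose `B`-dual basis is `e ∘ dual`
    (I : Type*) [Fintype I] [DecidableEq I]
    (e : Module.Basis I k A) (dual : I → I)
    (hdualbasis : ∀ U V : I, B (e U) (e (dual V)) = if U = V then 1 else 0)
    -- two one-dimensional representations of `A`
    (lam mu : A →ₐ[k] k)
    (hne : (∑ U : I, lam (e U) * mu (e (dual U))) ≠ 0) :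
    lam = mu := by
  classical
  -- `dual` is injective, hence bijective
  have hinj : Function.Injective dual := by
    intro U V h
    have h1 := hdualbasis U U
    have h2 := hdualbasis U V
    rw [h] at h1
    rw [h1, if_pos rfl] at h2
    by_contra hUV
    rw [if_neg hUV] at h2
    exact one_ne_zero h2
  have hbij : Function.Bijective dual := Finite.injective_iff_bijective.mp hinj
  let σ : I ≃ I := Equiv.ofBijective dual hbij
  let f : Module.Basis I k A := e.reindex σ.symm
  have hf : ∀ V : I, f V = e (dual V) := by
    intro V
    simp [f, Module.Basis.reindex_apply, σ]
  -- coefficients with respect to `e`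
  have hcoeff : ∀ (x : A) (U : I), B x (e (dual U)) = e.repr x U := by
    intro x U
    conv_lhs => rw [← e.sum_repr x]
    simp only [map_sum, LinearMap.sum_apply, map_smul, LinearMap.smul_apply,
      hdualbasis, smul_eq_mul, mul_ite, mul_one, mul_zero]
    simp
  have hx2 : ∀ x : A, x = ∑ U : I, B x (e (dual U)) • e U := by
    intro x
    simp_rw [hcoeff]
    exact (e.sum_repr x).symm
  -- coefficients with respect to `f`
  have hcoeff2 : ∀ (x : A) (V : I), B (e V) x = f.repr x V := by
    intro x V
    conv_lhs => rw [← f.sum_repr x]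
    simp only [map_sum, map_smul, hf, hdualbasis, smul_eq_mul, mul_ite, mul_one, mul_zero]
    simp
  have hx : ∀ x : A, x = ∑ V : I, B (e V) x • e (dual V) := by
    intro x
    simp_rw [hcoeff2, ← hf]
    exact (f.sum_repr x).symm
  -- key Casimir-type identity
  have key : ∀ a : A,
      (∑ U : I, lam (a * e U) * mu (e (dual U))) =
      ∑ U : I, lam (e U) * mu (e (dual U) * a) := by
    intro a
    have lhs : ∀ U : I, lam (a * e U) = ∑ V : I, B (e U) (e (dual V) * a) * lam (e V) := by
      intro U
      conv_lhs => rw [hx2 (a * e U)]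
      rw [map_sum]
      refine Finset.sum_congr rfl fun V _ => ?_
      rw [map_smul, smul_eq_mul]
      congr 1
      rw [hsymm (a * e U), ← hinv, hsymm]
    have rhs : ∀ U : I, mu (e (dual U) * a) =
        ∑ V : I, B (e V) (e (dual U) * a) * mu (e (dual V)) := by
      intro U
      conv_lhs => rw [hx (e (dual U) * a)]
      rw [map_sum]
      refine Finset.sum_congr rfl fun V _ => ?_
      rw [map_smul, smul_eq_mul]
    simp_rw [lhs, rhs, Finset.sum_mul, Finset.mul_sum]
    rw [Finset.sum_comm (γ := I)]
    refine Finset.sum_congr rfl fun U _ => Finset.sum_congr rfl fun V _ => ?_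
    ring
  apply AlgHom.ext
  intro a
  have h1 : lam a * (∑ U : I, lam (e U) * mu (e (dual U))) =
      (∑ U : I, lam (e U) * mu (e (dual U))) * mu a := by
    rw [Finset.mul_sum, Finset.sum_mul]
    calc (∑ U : I, lam a * (lam (e U) * mu (e (dual U))))
        = ∑ U : I, lam (a * e U) * mu (e (dual U)) := by
          refine Finset.sum_congr rfl fun U _ => ?_
          rw [map_mul]; ring
      _ = ∑ U : I, lam (e U) * mu (e (dual U) * a) := key a
      _ = ∑ U : I, lam (e U) * mu (e (dual U)) * mu a := by
          refine Finset.sum_congr rfl fun U _ => ?_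
          rw [map_mul]; ring
  have h2 : lam a * (∑ U : I, lam (e U) * mu (e (dual U))) =
      mu a * (∑ U : I, lam (e U) * mu (e (dual U))) := by
    rw [h1, mul_comm]
  exact mul_right_cancel₀ hne h2
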